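/- If G is a finite group and N is a normal subgroup of G such that N \ (N ∩ Z(G)) consists of exactly one G-conjugacy class, then N is a p-group for some prime p and N/(N ∩ Z(G)) is an elementary abelian p-group. -/
import Mathlib


/-- The `G`-conjugacy class of `x`. -/
def gClass {G : Type*} [Group G] (x : G) : Set G := {y | ∃ g : G, y = g * x * g⁻¹}

/-- If `N ⊴ G` and `N \ (N ∩ Z(G))` consists of exactly one `G`-conjugacy class, then `N`
is a `p`-group and `N/(N ∩ Z(G))` is elementary abelian (exponent `p` and abelian mod center). -/
theorem stmt_0 {G : Type*} [Group G] [Fintype G] (N : Subgroup G) [N.Normal]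
    (x : G) (hxN : x ∈ N) (hxZ : x ∉ Subgroup.center G)
    (h : (N : Set G) \ (Subgroup.center G : Set G) = gClass x) :
    ∃ p : ℕ, p.Prime ∧ IsPGroup p N ∧
      (∀ y ∈ N, y ^ p ∈ Subgroup.center G) ∧
      (∀ a ∈ N, ∀ b ∈ N, a * b * a⁻¹ * b⁻¹ ∈ Subgroup.center G) := by
  classical
  have hclass : ∀ y : G, y ∈ N → y ∉ Subgroup.center G → ∃ g : G, y = g * x * g⁻¹ := by
    intro y hy hz
    have : y ∈ (N : Set G) \ (Subgroup.center G : Set G) := ⟨hy, hz⟩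
    rw [h] at this; exact this
  have hcentral_conj : ∀ c ∈ Subgroup.center G, ∀ g : G, g * c * g⁻¹ = c := by
    intro c hc g
    have := (Subgroup.mem_center_iff.mp hc g)
    rw [this, mul_assoc, mul_inv_cancel, mul_one]
  have hord_conj : ∀ (g y : G), orderOf (g * y * g⁻¹) = orderOf y := by
    intro g y
    have := orderOf_injective (MulAut.conj g).toMonoidHom (MulAut.conj g).injective y
    simpa [MulAut.conj] using this
  set n := orderOf x with hn
  have hx1 : x ≠ 1 := fun e => hxZ (e ▸ (Subgroup.center G).one_mem)
  have hn1 : n ≠ 1 := fun e => hx1 (orderOf_eq_one_iff.mp e)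
  have hn0 : n ≠ 0 := (orderOf_pos x).ne'
  -- for every prime q dividing n, x ^ q is central
  have key : ∀ q : ℕ, q.Prime → q ∣ n → x ^ q ∈ Subgroup.center G := by
    intro q hq hqn
    by_contra hzq
    obtain ⟨g, hg⟩ := hclass (x ^ q) (N.pow_mem hxN q) hzq
    have h1 : orderOf (x ^ q) = n := by
      rw [hg, hord_conj]
    have h2 : orderOf (x ^ q) = n / q := by
      rw [orderOf_pow, ← hn, Nat.gcd_eq_right hqn]
    have hlt : n / q < n := Nat.div_lt_self (Nat.pos_of_ne_zero hn0) hq.one_lt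
    omega
  set p := n.minFac with hp
  have hpp : p.Prime := Nat.minFac_prime hn1
  have hpd : p ∣ n := Nat.minFac_dvd n
  have huniq : ∀ {q : ℕ}, q.Prime → q ∣ n → q = p := by
    intro q hq hqn
    by_contra hne
    have hco : Nat.gcd p q = 1 := (Nat.coprime_primes hpp hq).mpr (fun e => hne e.symm)
    have hb := Nat.gcd_eq_gcd_ab p q
    rw [hco] at hb
    have hxp := key p hpp hpd
    have hxq := key q hq hqn
    have hxeq : (x ^ p) ^ Nat.gcdA p q * (x ^ q) ^ Nat.gcdB p q = x := by
      rw [← zpow_natCast x p, ← zpow_natCast x q, ← zpow_mul, ← zpow_mul, ← zpow_add, ← hb]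
      norm_num
    have hmem : (x ^ p) ^ Nat.gcdA p q * (x ^ q) ^ Nat.gcdB p q ∈ Subgroup.center G :=
      (Subgroup.center G).mul_mem
        ((Subgroup.center G).zpow_mem hxp _) ((Subgroup.center G).zpow_mem hxq _)
    rw [hxeq] at hmem
    exact hxZ hmem
  obtain ⟨k, hk⟩ : ∃ k, n = p ^ k :=
    ⟨_, Nat.eq_prime_pow_of_unique_prime_dvd hn0 fun hq hd => huniq hq hd⟩
  -- every noncentral element of N has order n
  have hordN : ∀ y : G, y ∈ N → y ∉ Subgroup.center G → orderOf y = n := by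
    intro y hy hz
    obtain ⟨g, hg⟩ := hclass y hy hz
    rw [hg, hord_conj]
  -- every element of N has p-power order
  have horder : ∀ y : G, y ∈ N → ∃ j, orderOf y = p ^ j := by
    intro y hy
    by_cases hz : y ∈ Subgroup.center G
    · have hy0 : orderOf y ≠ 0 := (orderOf_pos y).ne'
      refine ⟨_, Nat.eq_prime_pow_of_unique_prime_dvd hy0 ?_⟩
      intro q hq hqd
      by_contra hne
      -- w := y ^ (orderOf y / q) has order q and is central, in N
      set w := y ^ (orderOf y / q) with hw
      have hdvd : orderOf y / q ∣ orderOf y := Nat.div_dvd_of_dvd hqd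
      have hwq : orderOf w = q := by
        rw [hw, orderOf_pow, Nat.gcd_eq_right hdvd,
          Nat.div_div_self hqd hy0]
      have hwZ : w ∈ Subgroup.center G := (Subgroup.center G).pow_mem hz _
      have hwN : w ∈ N := N.pow_mem hy _
      have hcomm : Commute x w := Subgroup.mem_center_iff.mp hwZ x
      have hcop : Nat.Coprime (orderOf x) (orderOf w) := by
        rw [hwq, ← hn, hk]
        exact Nat.Coprime.pow_left _ ((Nat.coprime_primes hpp hq).mpr
          (fun e => hne e.symm))
      have hxwN : x * w ∈ N := N.mul_mem hxN hwN
      have hxwZ : x * w ∉ Subgroup.center G := by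
        intro hc
        exact hxZ (by
          have : x = (x * w) * w⁻¹ := by group
          rw [this]
          exact (Subgroup.center G).mul_mem hc ((Subgroup.center G).inv_mem hwZ))
      have h1 : orderOf (x * w) = n := hordN _ hxwN hxwZ
      have h2 : orderOf (x * w) = n * q := by
        rw [hcomm.orderOf_mul_eq_mul_orderOf_of_coprime hcop, ← hn, hwq]
      have hnq : n * q = n := by rw [← h2, h1]
      have hq1 : q = 1 := Nat.eq_of_mul_eq_mul_left (Nat.pos_of_ne_zero hn0)
        (by rw [mul_one, hnq])
      exact hq.one_lt.ne' hq1
    · exact ⟨k, by rw [hordN y hy hz, hk]⟩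
  haveI : Fact p.Prime := ⟨hpp⟩
  have hPG : IsPGroup p N := by
    rw [IsPGroup.iff_orderOf]
    intro g
    obtain ⟨j, hj⟩ := horder (g : G) g.2
    exact ⟨j, by
      rw [← hj]
      exact Subgroup.orderOf_coe g ▸ rfl⟩
  -- x ^ p is central, hence all p-th powers are central
  have hxpZ : x ^ p ∈ Subgroup.center G := key p hpp hpd
  have hpow : ∀ y ∈ N, y ^ p ∈ Subgroup.center G := by
    intro y hy
    by_cases hz : y ∈ Subgroup.center G
    · exact (Subgroup.center G).pow_mem hz p
    · obtain ⟨g, hg⟩ := hclass y hy hz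
      rw [hg, conj_pow, hcentral_conj _ hxpZ g]
      exact hxpZ
  -- the quotient N / (Z(G) ∩ N) argument for commutators
  have hZnormal : (Subgroup.center G).Normal :=
    ⟨fun c hc g => by rw [hcentral_conj c hc g]; exact hc⟩
  haveI : ((Subgroup.center G).subgroupOf N).Normal := hZnormal.subgroupOf N
  set H := (Subgroup.center G).subgroupOf N with hH
  have hQ : IsPGroup p (N ⧸ H) := hPG.to_quotient H
  haveI : Nontrivial (N ⧸ H) := by
    refine ⟨⟨QuotientGroup.mk ⟨x, hxN⟩, 1, ?_⟩⟩
    rw [Ne, QuotientGroup.eq_one_iff, Subgroup.mem_subgroupOf]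
    exact hxZ
  haveI : Nontrivial (Subgroup.center (N ⧸ H)) := hQ.center_nontrivial
  obtain ⟨c, hc1⟩ := exists_ne (1 : Subgroup.center (N ⧸ H))
  obtain ⟨z, hzc⟩ := QuotientGroup.mk_surjective (c : N ⧸ H)
  -- z : N with mk z central in the quotient
  have hzZ : (z : G) ∉ Subgroup.center G := by
    intro hz
    apply hc1
    have : (c : N ⧸ H) = 1 := by
      rw [← hzc, QuotientGroup.eq_one_iff, Subgroup.mem_subgroupOf]
      exact hz
    exact Subtype.ext this
  have prop : ∀ w : N, (z : G)⁻¹ * (w : G)⁻¹ * z * w ∈ Subgroup.center G := by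
    intro w
    have hcen := Subgroup.mem_center_iff.mp c.2 (QuotientGroup.mk w)
    rw [← hzc] at hcen
    have : (QuotientGroup.mk (w * z) : N ⧸ H) = QuotientGroup.mk (z * w) := by
      rw [QuotientGroup.mk_mul, QuotientGroup.mk_mul, hcen]
    rw [QuotientGroup.eq, hH, Subgroup.mem_subgroupOf] at this
    simpa [mul_assoc] using this
  have hzcomm : ∀ v : G, v ∈ N → (z : G) * v * (z : G)⁻¹ * v⁻¹ ∈ Subgroup.center G := by
    intro v hv
    have hm := prop ⟨v⁻¹, N.inv_mem hv⟩
    simp only [Subgroup.coe_mk, inv_inv] at hm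
    have heq : (z : G) * v * (z : G)⁻¹ * v⁻¹ =
        (z : G) * ((z : G)⁻¹ * v * (z : G) * v⁻¹)⁻¹ * (z : G)⁻¹ := by group
    rw [heq, hcentral_conj _ ((Subgroup.center G).inv_mem hm) z]
    exact (Subgroup.center G).inv_mem hm
  refine ⟨p, hpp, hPG, hpow, ?_⟩
  intro a ha b hb
  by_cases haZ : a ∈ Subgroup.center G
  · have hab : b * a = a * b := Subgroup.mem_center_iff.mp haZ b
    have : a * b * a⁻¹ * b⁻¹ = 1 := by rw [← hab]; group
    rw [this]; exact (Subgroup.center G).one_mem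
  · obtain ⟨g, hg⟩ := hclass a ha haZ
    obtain ⟨g', hg'⟩ := hclass (z : G) z.2 hzZ
    set u := g * g'⁻¹ with hu
    have hau : a = u * z * u⁻¹ := by
      rw [hg, hu, hg']; group
    set v := u⁻¹ * b * u with hv
    have hvN : v ∈ N := by
      have := Subgroup.Normal.conj_mem ‹N.Normal› b hb u⁻¹
      simpa [hv, mul_assoc] using this
    have hm := hzcomm v hvN
    have heq : a * b * a⁻¹ * b⁻¹ = u * ((z : G) * v * (z : G)⁻¹ * v⁻¹) * u⁻¹ := by
      rw [hau, hv]; group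
    rw [heq, hcentral_conj _ hm u]
    exact hm
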